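/- Let K be a compact Hausdorff space and let (x_n) be a sequence in K that does not converge to any point of K. Then there exists a continuous function f : K → ℝ such that the sets A = {n ∈ ℕ : f(x_n) = 0} and B = {n ∈ ℕ : f(x_n) = 1} are both infinite. -/

import Mathlib

open Filter Topology

/-- A bounded linear operator `T` on `C(K, ℝ)` is a *weak multiplier* if for every bounded
pairwise disjoint sequence `(e_n)` in `C(K, ℝ)` and every sequence `(x_n)` in `K` with
`e_n (x_n) = 0` for all `n`, one has `T (e_n) (x_n) → 0`. -/
def IsWeakMultiplier {K : Type*} [TopologicalSpace K] [CompactSpace K]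
    (T : C(K, ℝ) →L[ℝ] C(K, ℝ)) : Prop :=
  ∀ (e : ℕ → C(K, ℝ)) (x : ℕ → K),
    (∃ M : ℝ, ∀ n, ‖e n‖ ≤ M) →
    (∀ i j, i ≠ j → e i * e j = 0) →
    (∀ n, (e n) (x n) = 0) →
    Filter.Tendsto (fun n => (T (e n)) (x n)) Filter.atTop (nhds 0)

/-- An operator on `C(K, ℝ)` is *weakly compact* if the image of the closed unit ball has
compact closure in the weak topology. -/
def IsWeaklyCompactOp {K : Type*} [TopologicalSpace K] [CompactSpace K]
    (S : C(K, ℝ) →L[ℝ] C(K, ℝ)) : Prop :=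
  IsCompact (closure ((toWeakSpace ℝ C(K, ℝ)) '' (S '' Metric.closedBall 0 1)))

/-- An operator on `C(K, ℝ)` is a *weak multiplication* if it has the form `g•I + S` with
`g ∈ C(K, ℝ)` and `S` weakly compact. -/
def IsWeakMultiplication {K : Type*} [TopologicalSpace K] [CompactSpace K]
    (T : C(K, ℝ) →L[ℝ] C(K, ℝ)) : Prop :=
  ∃ (g : C(K, ℝ)) (S : C(K, ℝ) →L[ℝ] C(K, ℝ)),
    IsWeaklyCompactOp S ∧ T = ContinuousLinearMap.mul ℝ C(K, ℝ) g + S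

/-- A subset `A` of a real vector space is *lineable* if `A ∪ {0}` contains an
infinite-dimensional subspace. -/
def Lineable {X : Type*} [AddCommGroup X] [Module ℝ X] (A : Set X) : Prop :=
  ∃ W : Submodule ℝ X, ¬ FiniteDimensional ℝ W ∧ (W : Set X) ⊆ A ∪ {0}

/-- A subset `A` of a real normed space is *spaceable* if `A ∪ {0}` contains a closed
infinite-dimensional subspace. -/
def Spaceable {X : Type*} [NormedAddCommGroup X] [NormedSpace ℝ X] (A : Set X) : Prop :=
  ∃ W : Submodule ℝ X, IsClosed (W : Set X) ∧ ¬ FiniteDimensional ℝ W ∧ (W : Set X) ⊆ A ∪ {0}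

/-- If a sequence in a compact Hausdorff space `K` does not converge, then there is a continuous
real-valued function on `K` taking the value `0` on infinitely many terms of the sequence
and the value `1` on infinitely many terms. -/
theorem exists_continuous_zero_one_infinite_of_not_convergent
    {K : Type*} [TopologicalSpace K] [CompactSpace K] [T2Space K]
    (x : ℕ → K) (h : ∀ p : K, ¬ Filter.Tendsto x Filter.atTop (nhds p)) :
    ∃ f : C(K, ℝ), {n : ℕ | f (x n) = 0}.Infinite ∧ {n : ℕ | f (x n) = 1}.Infinite := by
  -- There exist two distinct cluster points p ≠ q of the sequence.
  obtain ⟨p, -, hp⟩ := isCompact_univ.exists_mapClusterPt (f := Filter.atTop) (u := x)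
    (by simp)
  have : ¬ ∀ a, MapClusterPt a Filter.atTop x → a = p := by
    intro hall
    exact h p (tendsto_nhds_of_unique_mapClusterPt hall)
  push_neg at this
  obtain ⟨q, hq, hqp⟩ := this
  -- Urysohn's lemma
  obtain ⟨f0, hf0p, hf0q, hf0_mem⟩ :=
    exists_continuous_zero_one_of_isClosed (isClosed_singleton (x := p))
      (isClosed_singleton (x := q)) (by simp [Set.disjoint_singleton]; exact fun e => hqp e.symm)
  -- truncate
  set f : C(K, ℝ) := ⟨fun k => max 0 (min 1 (2 * f0 k - 1/2)), by fun_prop⟩ with hf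
  refine ⟨f, ?_, ?_⟩
  · have hsub : {n : ℕ | f0 (x n) < 1/4} ⊆ {n : ℕ | f (x n) = 0} := by
      intro n hn
      simp only [Set.mem_setOf_eq] at hn ⊢
      have h1 : 2 * f0 (x n) - 1/2 ≤ 0 := by linarith
      simp only [hf, ContinuousMap.coe_mk]
      rw [min_eq_right (by linarith), max_eq_left h1]
    refine Set.Infinite.mono hsub ?_
    rw [← Nat.frequently_atTop_iff_infinite]
    have : {k : K | f0 k < 1/4} ∈ nhds p := by
      refine (f0.continuous.isOpen_preimage _ isOpen_Iio).mem_nhds ?_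
      show f0 p < 1/4
      rw [hf0p (Set.mem_singleton p)]; norm_num
    exact mapClusterPt_iff_frequently.mp hp _ this
  · have hsub : {n : ℕ | f0 (x n) > 3/4} ⊆ {n : ℕ | f (x n) = 1} := by
      intro n hn
      simp only [Set.mem_setOf_eq] at hn ⊢
      have h1 : (1:ℝ) ≤ 2 * f0 (x n) - 1/2 := by linarith
      simp only [hf, ContinuousMap.coe_mk]
      rw [min_eq_left h1, max_eq_right zero_le_one]
    refine Set.Infinite.mono hsub ?_
    rw [← Nat.frequently_atTop_iff_infinite]
    have : {k : K | f0 k > 3/4} ∈ nhds q := by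
      refine (f0.continuous.isOpen_preimage _ isOpen_Ioi).mem_nhds ?_
      show f0 q > 3/4
      rw [hf0q (Set.mem_singleton q)]; norm_num
    exact mapClusterPt_iff_frequently.mp hq _ this
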